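/- Let W be a real vector space, e₁,…,e_n ∈ W and φ₁,…,φ_n linear functionals on W satisfying: (a) the only tuple of nonnegative reals (a₁,…,a_n) with Σ a_i e_i = 0 is zero; (b) φ_i(e_j) ≥ 0 for all i ≠ j; (c) the only x ∈ ℝ_{≥0}e₁ + ⋯ + ℝ_{≥0}e_n with φ_i(x) ≥ 0 for all i is 0. If moreover the matrix (φ_i(e_j)) is symmetric, then it is negative definite. -/

import Mathlib

open scoped RealInnerProductSpace

lemma auxQ (n : ℕ) (Q : Matrix (Fin n) (Fin n) ℝ)
    (hsym : ∀ i j, Q i j = Q j i)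
    (hoff : ∀ i j, i ≠ j → 0 ≤ Q i j)
    (hcone : ∀ u : Fin n → ℝ, (∀ i, 0 ≤ u i) → (∀ i, 0 ≤ ∑ j, Q i j * u j) → u = 0) :
    ∀ v : Fin n → ℝ, v ≠ 0 → (∑ i, ∑ j, v i * Q i j * v j) < 0 := by
  intro v hv
  haveI : Nonempty (Fin n) := by
    by_contra h
    exact hv (funext fun i => absurd ⟨i⟩ h)
  obtain ⟨i0⟩ := ‹Nonempty (Fin n)›
  set E := EuclideanSpace ℝ (Fin n) with hE
  let T : E →L[ℝ] E := LinearMap.toContinuousLinearMap (Matrix.toEuclideanLin Q)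
  have hTapp : ∀ (x : E) (i : Fin n), T x i = ∑ j, Q i j * x j := by
    intro x i
    show Matrix.toEuclideanLin Q x i = _
    rw [Matrix.toEuclideanLin_apply]
    simp [Matrix.mulVec, dotProduct]
  have hinner : ∀ x y : E, ⟪T x, y⟫ = ∑ i, ∑ j, Q i j * x j * y i := by
    intro x y
    rw [PiLp.inner_apply]
    simp only [RCLike.inner_apply, conj_trivial, hTapp]
    exact Finset.sum_congr rfl fun i _ => by rw [mul_comm, Finset.sum_mul]
  have hT : IsSelfAdjoint T := by
    rw [ContinuousLinearMap.isSelfAdjoint_iff_isSymmetric]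
    intro x y
    simp only [ContinuousLinearMap.coe_coe]
    have h2 : ⟪x, T y⟫ = ∑ i, ∑ j, Q i j * y j * x i := by
      rw [real_inner_comm]; exact hinner y x
    rw [hinner x y, h2, Finset.sum_comm]
    exact Finset.sum_congr rfl fun i _ => Finset.sum_congr rfl fun j _ => by
      rw [hsym i j]; ring
  have hreapp : ∀ x : E, T.reApplyInnerSelf x = ∑ i, ∑ j, Q i j * x j * x i := by
    intro x
    rw [ContinuousLinearMap.reApplyInnerSelf_apply]
    exact hinner x x
  -- maximize on sphere
  have hsph : IsCompact (Metric.sphere (0 : E) 1) := isCompact_sphere _ _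
  have hne : (Metric.sphere (0 : E) 1).Nonempty :=
    ⟨EuclideanSpace.single i0 1, by rw [mem_sphere_iff_norm, sub_zero, EuclideanSpace.norm_single]; norm_num⟩
  obtain ⟨w, hwmem, hwmax⟩ := hsph.exists_isMaxOn hne
    T.reApplyInnerSelf_continuous.continuousOn
  have hwn : ‖w‖ = 1 := by simpa using hwmem
  -- абс value vector
  let u : E := WithLp.toLp 2 (fun i => |w i| : Fin n → ℝ)
  have hui : ∀ i, u i = |w i| := fun i => rfl
  have hun : ‖u‖ = 1 := by
    rw [EuclideanSpace.norm_eq] at hwn ⊢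
    simpa [hui] using hwn
  have hune : u ≠ 0 := by
    intro h
    rw [h] at hun
    simp at hun
  have humem : u ∈ Metric.sphere (0 : E) 1 := by simp [hun]
  have hwu : T.reApplyInnerSelf w ≤ T.reApplyInnerSelf u := by
    rw [hreapp, hreapp]
    refine Finset.sum_le_sum fun i _ => Finset.sum_le_sum fun j _ => ?_
    rcases eq_or_ne i j with rfl | hij
    · simp only [hui]
      rw [mul_assoc, mul_assoc, abs_mul_abs_self]
    · have := hoff i j hij
      have habs : w j * w i ≤ |w j| * |w i| := by
        calc w j * w i ≤ |w j * w i| := le_abs_self _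
        _ = |w j| * |w i| := abs_mul _ _
      simp only [hui]
      nlinarith
  have humax : IsMaxOn T.reApplyInnerSelf (Metric.sphere (0 : E) ‖u‖) u := by
    rw [hun]
    intro x hx
    calc T.reApplyInnerSelf x ≤ T.reApplyInnerSelf w := hwmax (by simpa [hwn] using hx)
    _ ≤ T.reApplyInnerSelf u := hwu
  have hev := hT.hasEigenvector_of_isMaxOn hune humax
  set lam : ℝ := ⨆ x : { x : E // x ≠ 0 }, T.rayleighQuotient x with hlam
  have hTu : T u = lam • u := by
    have := hev.apply_eq_smul
    simpa using this
  -- lam < 0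
  have hlamneg : lam < 0 := by
    by_contra h
    push_neg at h
    have : (fun i => u i) = 0 := by
      apply hcone
      · intro i; rw [hui]; exact abs_nonneg _
      · intro i
        have : (∑ j, Q i j * u j) = lam * u i := by
          rw [← hTapp u i, hTu]; rfl
        rw [this]
        exact mul_nonneg h (by rw [hui]; exact abs_nonneg _)
    exact hune (PiLp.ext fun i => congrFun this i)
  -- bound Rayleigh on unit sphere
  have hbound : ∀ x : E, ‖x‖ = 1 → T.reApplyInnerSelf x ≤ lam := by
    intro x hx
    have h1 : T.reApplyInnerSelf x ≤ T.reApplyInnerSelf u := humax (by simp [hun, hx])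
    have h2 : T.reApplyInnerSelf u = lam := by
      rw [ContinuousLinearMap.reApplyInnerSelf_apply, hTu]
      simp [real_inner_smul_left, real_inner_self_eq_norm_sq, hun]
    linarith
  -- conclude
  let v' : E := WithLp.toLp 2 (v : Fin n → ℝ)
  have hv'ne : v' ≠ 0 := by
    intro h
    exact hv (funext fun i => congrArg (fun z : E => z i) h)
  have hv'n : ‖v'‖ ≠ 0 := norm_ne_zero_iff.mpr hv'ne
  have hv'pos : (0:ℝ) < ‖v'‖ := norm_pos_iff.mpr hv'ne
  let x : E := ‖v'‖⁻¹ • v'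
  have hxn : ‖x‖ = 1 := by
    simp [x, norm_smul, abs_of_pos (inv_pos.mpr hv'pos), abs_of_pos hv'pos, inv_mul_cancel₀ hv'n]
  have hxb := hbound x hxn
  have hquad : T.reApplyInnerSelf v' = ∑ i, ∑ j, v i * Q i j * v j := by
    rw [hreapp]
    exact Finset.sum_congr rfl fun i _ => Finset.sum_congr rfl fun j _ => by ring
  have hscale : T.reApplyInnerSelf v' = ‖v'‖^2 * T.reApplyInnerSelf x := by
    rw [hreapp, hreapp]
    simp only [Finset.mul_sum]
    refine Finset.sum_congr rfl fun i _ => Finset.sum_congr rfl fun j _ => ?_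
    have hxi : ∀ k, x k = ‖v'‖⁻¹ * v' k := fun k => rfl
    rw [hxi, hxi]
    field_simp
  rw [← hquad, hscale]
  have : ‖v'‖^2 * T.reApplyInnerSelf x ≤ ‖v'‖^2 * lam := by
    apply mul_le_mul_of_nonneg_left hxb (sq_nonneg _)
  have hlt : ‖v'‖^2 * lam < 0 := mul_neg_of_pos_of_neg (by positivity) hlamneg
  linarith

theorem stmt3 {W : Type*} [AddCommGroup W] [Module ℝ W]
    (n : ℕ) (e : Fin n → W) (φ : Fin n → W →ₗ[ℝ] ℝ)
    (ha : ∀ a : Fin n → ℝ, (∀ i, 0 ≤ a i) → ∑ i, a i • e i = 0 → ∀ i, a i = 0)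
    (hb : ∀ i j, i ≠ j → 0 ≤ φ i (e j))
    (hc : ∀ x : W, (∃ a : Fin n → ℝ, (∀ i, 0 ≤ a i) ∧ x = ∑ i, a i • e i) →
      (∀ i, 0 ≤ φ i x) → x = 0)
    (hsym : ∀ i j, φ i (e j) = φ j (e i)) :
    ∀ v : Fin n → ℝ, v ≠ 0 → (∑ i, ∑ j, v i * φ i (e j) * v j) < 0 := by
  have key := auxQ n (Matrix.of fun i j => φ i (e j)) hsym hb ?_
  · exact key
  · intro u hu hQu
    have hφ : ∀ i, φ i (∑ j, u j • e j) = ∑ j, (Matrix.of fun i j => φ i (e j)) i j * u j := by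
      intro i
      rw [map_sum]
      exact Finset.sum_congr rfl fun j _ => by
        rw [map_smul, smul_eq_mul, mul_comm]; rfl
    have hx : (∑ j, u j • e j) = 0 := by
      apply hc _ ⟨u, hu, rfl⟩
      intro i
      rw [hφ i]
      exact hQu i
    exact funext (ha u hu hx)
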